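/- Let n ≥ 3 and n ≤ k. Suppose S is an independent set in G_n^k containing a strict alternating cycle {(x_1,y_1),(x_2,y_2),(x_3,y_3)} with x_1 = a_1 and y_3 = b_{k+2}, satisfying the Disjoint Property, and suppose every pair of S has the form (a_i,b_j) with 1 ≤ i ≤ k+2 and 1 ≤ j ≤ k+2. Then |S| ≤ (k+1)(k+2)/2 + 2 − n. -/

import Mathlib

namespace CrownPaper

/-- Indices of the crown `S_n^k` live in `ZMod (n+k)`. The minimal element `a_i` is
incomparable to the maximal element `b_j` iff `(j - i) mod (n+k) ≤ k`. -/
def Incomp (n k : ℕ) (i j : ZMod (n + k)) : Prop := (j - i).val ≤ k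

/-- `a_i < b_j` in the crown `S_n^k` iff `(j - i) mod (n+k) > k`. -/
def CompLt (n k : ℕ) (i j : ZMod (n + k)) : Prop := k < (j - i).val

/-- A pair `(a_i, b_j)` is recorded as its pair of indices. -/
abbrev Pair (n k : ℕ) := ZMod (n + k) × ZMod (n + k)

/-- `(a_i, b_j)` is an incomparable (critical) pair. -/
def IsIncPair (n k : ℕ) (p : Pair n k) : Prop := Incomp n k p.1 p.2

/-- Adjacency in the graph `G_n^k` of critical pairs: `(a_i,b_j)` and `(a_p,b_q)` are
adjacent iff `a_i < b_q` and `a_p < b_j` in `S_n^k`. -/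
def Adj (n k : ℕ) (p q : Pair n k) : Prop :=
  CompLt n k p.1 q.2 ∧ CompLt n k q.1 p.2

/-- An independent set of critical pairs in `G_n^k`. -/
def Indep (n k : ℕ) (S : Set (Pair n k)) : Prop :=
  (∀ p ∈ S, IsIncPair n k p) ∧ ∀ p ∈ S, ∀ q ∈ S, ¬ Adj n k p q

/-- A set of pairs is reversible when some linear extension of the crown (encoded as an
injective map into `ℕ` on the disjoint union `A ⊕ B` preserving all strict comparabilities
`a_i < b_j`) puts `a` above `b` for every pair `(a,b)` of the set. -/
def Reversible (n k : ℕ) (S : Set (Pair n k)) : Prop :=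
  ∃ f : (ZMod (n + k)) ⊕ (ZMod (n + k)) → ℕ,
    Function.Injective f ∧
    (∀ i j : ZMod (n + k), CompLt n k i j → f (Sum.inl i) < f (Sum.inr j)) ∧
    ∀ p ∈ S, f (Sum.inr p.2) < f (Sum.inl p.1)

/-- Translation of `CompLt` to natural-number indices in the window `[1, k+2]`. -/
lemma compLt_iff (n k : ℕ) (hn : 3 ≤ n) (hnk : n ≤ k) (a b : ℕ)
    (ha : 1 ≤ a) (ha2 : a ≤ k+2) (hb : 1 ≤ b) (hb2 : b ≤ k+2) :
    CompLt n k (a : ZMod (n+k)) (b : ZMod (n+k)) ↔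
      ((a = 1 ∧ b = k+2) ∨ (b < a ∧ a < b + n)) := by
  haveI : NeZero (n+k) := ⟨by omega⟩
  have hz : ((n + k : ℕ) : ZMod (n+k)) = 0 := ZMod.natCast_self _
  have hcast : ((b : ZMod (n+k)) - (a : ZMod (n+k))) = ((b + (n+k) - a : ℕ) : ZMod (n+k)) := by
    rw [Nat.cast_sub (by omega), Nat.cast_add, hz, add_zero]
  rw [CompLt, hcast, ZMod.val_natCast]
  rcases le_or_gt a b with h | h
  · have he : b + (n+k) - a = (b - a) + (n+k) := by omega
    rw [he, Nat.add_mod_right, Nat.mod_eq_of_lt (by omega)]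
    omega
  · rw [Nat.mod_eq_of_lt (by omega)]
    omega

/-- If every element of `I` dominates no element of `J` (i.e. `i ≤ j` throughout),
with `J ⊆ [a,b]` and `I ⊆ [a+1,b+1]`, then `|J| + |I| ≤ b + 1 - a`. -/
lemma auxB1 (a b : ℕ) (hab : a ≤ b + 1) (J I : Finset ℕ) (hJ : J ⊆ Finset.Icc a b)
    (hI : I ⊆ Finset.Icc (a+1) (b+1))
    (hle : ∀ j ∈ J, ∀ i ∈ I, i ≤ j) :
    J.card + I.card + a ≤ b + 1 := by
  rcases J.eq_empty_or_nonempty with h | h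
  · have := Finset.card_le_card hI
    rw [Nat.card_Icc] at this
    subst h
    simp only [Finset.card_empty]
    omega
  · have hmJ : J.min' h ∈ J := J.min'_mem h
    have hJ' : J ⊆ Finset.Icc (J.min' h) b := by
      intro j hj
      simp only [Finset.mem_Icc]
      exact ⟨J.min'_le j hj, (Finset.mem_Icc.mp (hJ hj)).2⟩
    have hI' : I ⊆ Finset.Icc (a+1) (J.min' h) := by
      intro i hi
      simp only [Finset.mem_Icc]
      exact ⟨(Finset.mem_Icc.mp (hI hi)).1, hle _ hmJ i hi⟩
    have h1 := Finset.card_le_card hJ'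
    have h2 := Finset.card_le_card hI'
    have hma := Finset.mem_Icc.mp (hJ hmJ)
    rw [Nat.card_Icc] at h1 h2
    omega

/-- Key combinatorial lemma: if for all `j ∈ J`, `i ∈ I` we have `i ≤ j` or `i ≥ j + n`,
and some `j < i` occurs, then `|J| + |I| ≤ b + 3 - n - a`. -/
lemma auxB2 (n : ℕ) (hn : 2 ≤ n) :
    ∀ b : ℕ, ∀ (J I : Finset ℕ) (a : ℕ), 1 ≤ a → J ⊆ Finset.Icc a b →
    I ⊆ Finset.Icc (a+1) (b+1) →
    (∀ j ∈ J, ∀ i ∈ I, i ≤ j ∨ j + n ≤ i) →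
    (∃ j ∈ J, ∃ i ∈ I, j < i) →
    J.card + I.card + n + a ≤ b + 3 := by
  intro b
  induction b using Nat.strong_induction_on with
  | _ b IH =>
    intro J I a ha1 hJ hI hpair hcr
    classical
    obtain ⟨j0, hj0, i0, hi0, hji0⟩ := hcr
    set Jc := J.filter (fun j => ∃ i ∈ I, j < i) with hJcdef
    have hJcne : Jc.Nonempty := ⟨j0, by
      simp only [Jc, Finset.mem_filter]
      exact ⟨hj0, i0, hi0, hji0⟩⟩
    obtain ⟨js, hjsdef⟩ : ∃ js, js = Jc.max' hJcne := ⟨_, rfl⟩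
    have hjsJc : js ∈ Jc := hjsdef ▸ Jc.max'_mem hJcne
    have hjsmax : ∀ j ∈ Jc, j ≤ js := fun j hj => hjsdef ▸ Jc.le_max' j hj
    have hjsJ : js ∈ J := (Finset.mem_filter.mp hjsJc).1
    obtain ⟨i1, hi1I, hi1⟩ := (Finset.mem_filter.mp hjsJc).2
    set Ia := I.filter (fun i => js < i) with hIadef
    have hIane : Ia.Nonempty := ⟨i1, by simp only [Ia, Finset.mem_filter]; exact ⟨hi1I, hi1⟩⟩
    obtain ⟨is, hisdef⟩ : ∃ is, is = Ia.min' hIane := ⟨_, rfl⟩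
    have hisIa : is ∈ Ia := hisdef ▸ Ia.min'_mem hIane
    have hismin : ∀ i ∈ Ia, is ≤ i := fun i hi => hisdef ▸ Ia.min'_le i hi
    have hisI : is ∈ I := (Finset.mem_filter.mp hisIa).1
    have hjsis : js < is := (Finset.mem_filter.mp hisIa).2
    have hisn : js + n ≤ is := (hpair js hjsJ is hisI).resolve_left (by omega)
    have key1 : ∀ j ∈ J, js < j → ∀ i ∈ I, i ≤ j := by
      intro j hj hlt i hi
      by_contra hcon
      push_neg at hcon
      have : j ∈ Jc := Finset.mem_filter.mpr ⟨hj, i, hi, hcon⟩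
      have := hjsmax j this
      omega
    have key2 : ∀ j ∈ J, js < j → is ≤ j := fun j hj hlt => key1 j hj hlt is hisI
    have key3 : ∀ i ∈ I, i < is → i ≤ js := by
      intro i hi hlt
      by_contra hcon
      push_neg at hcon
      have : i ∈ Ia := Finset.mem_filter.mpr ⟨hi, hcon⟩
      have := hismin i this
      omega
    set Jlo := J.filter (fun j => j ≤ js) with hJlo
    set Jhi := J.filter (fun j => ¬ j ≤ js) with hJhi
    have hcJ : Jlo.card + Jhi.card = J.card :=
      Finset.card_filter_add_card_filter_not _
    set Ilo := I.filter (fun i => i < is) with hIlo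
    set Ihi := I.filter (fun i => ¬ i < is) with hIhi
    have hcI : Ilo.card + Ihi.card = I.card :=
      Finset.card_filter_add_card_filter_not _
    have hjsab := Finset.mem_Icc.mp (hJ hjsJ)
    have hisab := Finset.mem_Icc.mp (hI hisI)
    -- high part via auxB1
    have hhigh : Jhi.card + Ihi.card + (is - 1) ≤ b + 1 := by
      apply auxB1 (is - 1) b (by omega)
      · intro j hj
        obtain ⟨hjJ, hjgt⟩ := Finset.mem_filter.mp hj
        have := key2 j hjJ (by omega)
        have := (Finset.mem_Icc.mp (hJ hjJ)).2
        simp only [Finset.mem_Icc]; omega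
      · intro i hi
        obtain ⟨hiI, hige⟩ := Finset.mem_filter.mp hi
        have := (Finset.mem_Icc.mp (hI hiI)).2
        simp only [Finset.mem_Icc]; omega
      · intro j hj i hi
        obtain ⟨hjJ, hjgt⟩ := Finset.mem_filter.mp hj
        exact key1 j hjJ (by omega) i (Finset.mem_filter.mp hi).1
    -- low part
    have hjsLo : js ∈ Jlo := Finset.mem_filter.mpr ⟨hjsJ, le_refl _⟩
    set Jlo' := Jlo.erase js with hJlo'
    have hcJlo : Jlo'.card + 1 = Jlo.card := Finset.card_erase_add_one hjsLo
    have hJlo'sub : Jlo' ⊆ Finset.Icc a (js - 1) := by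
      intro j hj
      have hne := Finset.ne_of_mem_erase hj
      obtain ⟨hjJ, hjle⟩ := Finset.mem_filter.mp (Finset.mem_of_mem_erase hj)
      have := (Finset.mem_Icc.mp (hJ hjJ)).1
      simp only [Finset.mem_Icc]; omega
    have hIlosub : Ilo ⊆ Finset.Icc (a+1) ((js-1)+1) := by
      intro i hi
      obtain ⟨hiI, hilt⟩ := Finset.mem_filter.mp hi
      have h1 := key3 i hiI hilt
      have := (Finset.mem_Icc.mp (hI hiI)).1
      simp only [Finset.mem_Icc]; omega
    have hJlo'mem : ∀ j ∈ Jlo', j ∈ J := fun j hj =>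
      (Finset.mem_filter.mp (Finset.mem_of_mem_erase hj)).1
    have hIlomem : ∀ i ∈ Ilo, i ∈ I := fun i hi => (Finset.mem_filter.mp hi).1
    have hlow : Jlo'.card + Ilo.card + a ≤ (js - 1) + 1 ∨
        Jlo'.card + Ilo.card + n + a ≤ (js - 1) + 3 := by
      by_cases hcr2 : ∃ j ∈ Jlo', ∃ i ∈ Ilo, j < i
      · right
        exact IH (js - 1) (by omega) Jlo' Ilo a ha1 hJlo'sub hIlosub
          (fun j hj i hi => hpair j (hJlo'mem j hj) i (hIlomem i hi)) hcr2
      · left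
        push_neg at hcr2
        exact auxB1 a (js - 1) (by omega) Jlo' Ilo hJlo'sub hIlosub
          (fun j hj i hi => by have := hcr2 j hj i hi; omega)
    omega

/-- for `3 ≤ n ≤ k`, an independent set `S` in `G_n^k` containing a strict
alternating cycle of size `3` with the Disjoint Property, `x₁ = a₁` and `y₃ = b_{k+2}`,
all of whose pairs `(a_i, b_j)` have `1 ≤ i, j ≤ k+2`, satisfies
`|S| ≤ (k+1)(k+2)/2 + 2 − n`. -/
theorem indep_with_sac_card_bound (n k : ℕ) (hn : 3 ≤ n) (hnk : n ≤ k)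
    (S : Set (Pair n k)) (hS : Indep n k S)
    (x y : ZMod 3 → ZMod (n + k))
    (hmem : ∀ α : ZMod 3, (x α, y α) ∈ S)
    (hstrict : ∀ α β : ZMod 3, (CompLt n k (x α) (y β) ↔ β = α - 1))
    (hx1 : x 0 = (1 : ZMod (n + k)))
    (hy3 : y 2 = ((k + 2 : ℕ) : ZMod (n + k)))
    (hdisj : (x 0 - x 0).val ≤ (y 0 - x 0).val ∧
      (y 0 - x 0).val < (x 1 - x 0).val ∧
      (x 1 - x 0).val ≤ (y 1 - x 0).val ∧
      (y 1 - x 0).val < (x 2 - x 0).val ∧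
      (x 2 - x 0).val ≤ (y 2 - x 0).val)
    (hrange : ∀ p ∈ S, ∃ a b : ℕ, 1 ≤ a ∧ a ≤ k + 2 ∧ 1 ≤ b ∧ b ≤ k + 2 ∧
      p = (((a : ℕ) : ZMod (n + k)), ((b : ℕ) : ZMod (n + k)))) :
    S.ncard + n ≤ (k + 1) * (k + 2) / 2 + 2 := by
  classical
  haveI : NeZero (n + k) := ⟨by omega⟩
  set e : ℕ × ℕ → Pair n k := fun q => ((q.1 : ZMod (n+k)), (q.2 : ZMod (n+k))) with he
  set T : Finset (ℕ × ℕ) :=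
    (Finset.Icc 1 (k+2) ×ˢ Finset.Icc 1 (k+2)).filter (fun q => e q ∈ S) with hT
  have hTmem : ∀ q ∈ T, 1 ≤ q.1 ∧ q.1 ≤ k+2 ∧ 1 ≤ q.2 ∧ q.2 ≤ k+2 ∧ e q ∈ S := by
    intro q hq
    simp only [hT, Finset.mem_filter, Finset.mem_product, Finset.mem_Icc] at hq
    exact ⟨hq.1.1.1, hq.1.1.2, hq.1.2.1, hq.1.2.2, hq.2⟩
  -- S = e '' T
  have hST : S = e '' (T : Set (ℕ × ℕ)) := by
    ext p
    constructor
    · intro hp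
      obtain ⟨a, b, ha1, ha2, hb1, hb2, hpe⟩ := hrange p hp
      refine ⟨(a, b), Finset.mem_coe.mpr ?_, ?_⟩
      · simp only [hT, Finset.mem_filter, Finset.mem_product, Finset.mem_Icc]
        have heab : e (a, b) = p := hpe.symm
        exact ⟨⟨⟨ha1, ha2⟩, hb1, hb2⟩, Set.mem_of_eq_of_mem heab hp⟩
      · exact hpe.symm
    · rintro ⟨q, hq, rfl⟩
      exact (hTmem q (Finset.mem_coe.mp hq)).2.2.2.2
  have hinj : Set.InjOn e (T : Set (ℕ × ℕ)) := by
    intro q hq q' hq' hqq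
    have h1 := hTmem q (Finset.mem_coe.mp hq)
    have h2 := hTmem q' (Finset.mem_coe.mp hq')
    have e1 : (q.1 : ZMod (n+k)) = (q'.1 : ZMod (n+k)) := congrArg Prod.fst hqq
    have e2 : (q.2 : ZMod (n+k)) = (q'.2 : ZMod (n+k)) := congrArg Prod.snd hqq
    have v1 : q.1 = q'.1 := by
      have := congrArg ZMod.val e1
      rwa [ZMod.val_cast_of_lt (by omega), ZMod.val_cast_of_lt (by omega)] at this
    have v2 : q.2 = q'.2 := by
      have := congrArg ZMod.val e2
      rwa [ZMod.val_cast_of_lt (by omega), ZMod.val_cast_of_lt (by omega)] at this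
    exact Prod.ext v1 v2
  have hcard : S.ncard = T.card := by
    rw [hST, Set.ncard_image_of_injOn hinj, Set.ncard_coe_finset]
  -- cycle data
  have hY2 : (y 2 - x 0).val = k + 1 := by
    rw [hy3, hx1]
    have h1 : ((k+2 : ℕ) : ZMod (n+k)) - 1 = ((k+1 : ℕ) : ZMod (n+k)) := by
      push_cast; ring
    rw [h1, ZMod.val_cast_of_lt (by omega)]
  obtain ⟨-, hd2, hd3, hd4, hd5⟩ := hdisj
  rw [hY2] at hd5
  set Y0 := (y 0 - x 0).val with hY0
  set X2 := (x 2 - x 0).val with hX2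
  have hrepr : ∀ z : ZMod (n+k), ((z.val : ℕ) : ZMod (n+k)) = z := by
    intro z; simp [ZMod.natCast_val, ZMod.cast_id]
  have hy0rep : y 0 = ((Y0 + 1 : ℕ) : ZMod (n+k)) := by
    push_cast
    rw [hY0, hrepr (y 0 - x 0), hx1]
    ring
  have hx2rep : x 2 = ((X2 + 1 : ℕ) : ZMod (n+k)) := by
    push_cast
    rw [hX2, hrepr (x 2 - x 0), hx1]
    ring
  -- X2 ≥ Y0 + n
  have hX2Y0 : Y0 + n ≤ X2 := by
    have h0 : ¬ ((0 : ZMod 3) = 2 - 1) := by decide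
    have hnc : ¬ CompLt n k (x 2) (y 0) := fun h => h0 ((hstrict 2 0).mp h)
    rw [hx2rep, hy0rep,
      compLt_iff n k hn hnk _ _ (by omega) (by omega) (by omega) (by omega)] at hnc
    omega
  -- memberships of the cycle pairs
  have hT0 : (1, Y0 + 1) ∈ T := by
    simp only [hT, Finset.mem_filter, Finset.mem_product, Finset.mem_Icc]
    refine ⟨⟨⟨le_refl 1, by omega⟩, by omega, by omega⟩, ?_⟩
    have heq : e (1, Y0 + 1) = (x 0, y 0) := by
      rw [he]
      simp only
      rw [hx1, hy0rep]
      norm_num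
    rw [heq]; exact hmem 0
  have hTX2 : (X2 + 1, k + 2) ∈ T := by
    simp only [hT, Finset.mem_filter, Finset.mem_product, Finset.mem_Icc]
    refine ⟨⟨⟨by omega, by omega⟩, by omega, le_refl _⟩, ?_⟩
    have heq : e (X2 + 1, k + 2) = (x 2, y 2) := by
      rw [he]
      simp only
      rw [hx2rep, hy3]
    rw [heq]; exact hmem 2
  -- incomparability and independence in ℕ terms
  have hTinc : ∀ q ∈ T, ¬((q.1 = 1 ∧ q.2 = k+2) ∨ (q.2 < q.1 ∧ q.1 < q.2 + n)) := by
    intro q hq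
    obtain ⟨h1, h2, h3, h4, h5⟩ := hTmem q hq
    have hip := hS.1 _ h5
    have hnc : ¬ CompLt n k (q.1 : ZMod (n+k)) (q.2 : ZMod (n+k)) := by
      simp only [IsIncPair, Incomp, he] at hip
      simp only [CompLt]
      omega
    rwa [compLt_iff n k hn hnk _ _ h1 h2 h3 h4] at hnc
  have hTadj : ∀ q ∈ T, ∀ q' ∈ T,
      ¬(((q.1 = 1 ∧ q'.2 = k+2) ∨ (q'.2 < q.1 ∧ q.1 < q'.2 + n)) ∧
        ((q'.1 = 1 ∧ q.2 = k+2) ∨ (q.2 < q'.1 ∧ q'.1 < q.2 + n))) := by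
    intro q hq q' hq'
    obtain ⟨h1, h2, h3, h4, h5⟩ := hTmem q hq
    obtain ⟨h1', h2', h3', h4', h5'⟩ := hTmem q' hq'
    have hna := hS.2 _ h5 _ h5'
    simp only [Adj, he] at hna
    rwa [compLt_iff n k hn hnk _ _ h1 h2 h3' h4',
      compLt_iff n k hn hnk _ _ h1' h2' h3 h4] at hna
  have hTadj' : ∀ a b a' b' : ℕ, (a, b) ∈ T → (a', b') ∈ T →
      ¬(((a = 1 ∧ b' = k+2) ∨ (b' < a ∧ a < b' + n)) ∧
        ((a' = 1 ∧ b = k+2) ∨ (b < a' ∧ a' < b + n))) :=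
    fun a b a' b' h h' => hTadj _ h _ h'
  -- partition of T
  set T1 := T.filter (fun q => q.1 = 1) with hT1
  set Tr := T.filter (fun q => ¬ q.1 = 1) with hTr
  have hc1 : T1.card + Tr.card = T.card := Finset.card_filter_add_card_filter_not _
  set T2 := Tr.filter (fun q => q.2 = k+2) with hT2'
  set T3 := Tr.filter (fun q => ¬ q.2 = k+2) with hT3
  have hc2 : T2.card + T3.card = Tr.card := Finset.card_filter_add_card_filter_not _
  -- J and I
  set J := T1.image Prod.snd with hJ
  set I := T2.image Prod.fst with hI
  have hJcard : J.card = T1.card := by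
    apply Finset.card_image_of_injOn
    intro q hq q' hq' hh
    have e1 : q.1 = 1 := (Finset.mem_filter.mp hq).2
    have e2 : q'.1 = 1 := (Finset.mem_filter.mp hq').2
    exact Prod.ext (e1.trans e2.symm) hh
  have hIcard : I.card = T2.card := by
    apply Finset.card_image_of_injOn
    intro q hq q' hq' hh
    have e1 : q.2 = k+2 := (Finset.mem_filter.mp hq).2
    have e2 : q'.2 = k+2 := (Finset.mem_filter.mp hq').2
    exact Prod.ext hh (e1.trans e2.symm)
  have hJmem : ∀ b ∈ J, (1, b) ∈ T ∧ 1 ≤ b ∧ b ≤ k + 1 := by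
    intro b hb
    obtain ⟨q, hq, hqb⟩ := Finset.mem_image.mp hb
    obtain ⟨hqT, hq1⟩ := Finset.mem_filter.mp hq
    have hqe : q = (1, b) := Prod.ext hq1 hqb
    rw [hqe] at hqT
    obtain ⟨hm1, hm2, hm3, hm4, hm5⟩ := hTmem _ hqT
    simp only at hm3 hm4
    have hbne : b ≠ k + 2 := by
      intro hbk
      exact hTinc _ hqT (Or.inl ⟨rfl, by simpa using hbk⟩)
    exact ⟨hqT, by omega⟩
  have hImem : ∀ a ∈ I, (a, k+2) ∈ T ∧ 2 ≤ a ∧ a ≤ k + 2 := by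
    intro a ha
    obtain ⟨q, hq, hqa⟩ := Finset.mem_image.mp ha
    obtain ⟨hqTr, hq2⟩ := Finset.mem_filter.mp hq
    obtain ⟨hqT, hq1⟩ := Finset.mem_filter.mp hqTr
    have hqe : q = (a, k+2) := Prod.ext hqa hq2
    rw [hqe] at hqT hq1
    obtain ⟨hm1, hm2, hm3, hm4, hm5⟩ := hTmem _ hqT
    simp only at hm1 hm2 hq1
    exact ⟨hqT, by omega⟩
  -- the lemma bound: |J| + |I| ≤ k + 3 - n
  have hB2 : J.card + I.card + n + 1 ≤ (k+1) + 3 := by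
    apply auxB2 n (by omega) (k+1) J I 1 (le_refl 1)
    · intro b hb
      have := (hJmem b hb).2
      simp only [Finset.mem_Icc]; omega
    · intro a ha
      have := (hImem a ha).2
      simp only [Finset.mem_Icc]; omega
    · intro j hj i hi
      have h1 := (hJmem j hj).1
      have h2 := (hImem i hi).1
      have hadj := hTadj' 1 j i (k+2) h1 h2
      have hi2 := (hImem i hi).2
      have hj2 := (hJmem j hj).2
      omega
    · refine ⟨Y0 + 1, ?_, X2 + 1, ?_, by omega⟩
      · apply Finset.mem_image.mpr
        exact ⟨(1, Y0+1), Finset.mem_filter.mpr ⟨hT0, rfl⟩, rfl⟩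
      · apply Finset.mem_image.mpr
        refine ⟨(X2+1, k+2), Finset.mem_filter.mpr ⟨Finset.mem_filter.mpr ⟨hTX2, ?_⟩, rfl⟩, rfl⟩
        show ¬ (X2+1, k+2).1 = 1
        simp only
        omega
  -- T3 bound via injection into upper triangle
  set U := (Finset.Icc 2 (k+1) ×ˢ Finset.Icc 2 (k+1)).filter (fun q => q.1 ≤ q.2) with hU
  have hT3mem : ∀ q ∈ T3, q ∈ T ∧ 2 ≤ q.1 ∧ q.2 ≤ k + 1 := by
    intro q hq
    obtain ⟨hqTr, hq2⟩ := Finset.mem_filter.mp hq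
    obtain ⟨hqT, hq1⟩ := Finset.mem_filter.mp hqTr
    have hm := hTmem _ hqT
    exact ⟨hqT, by omega, by omega⟩
  have hT3down : ∀ q ∈ T3, q.2 < q.1 → q.2 + n ≤ q.1 := by
    intro q hq hlt
    have hqT := (hT3mem q hq).1
    have := hTinc q hqT
    omega
  have hT3U : T3.card ≤ U.card := by
    apply Finset.card_le_card_of_injOn (fun q => if q.1 ≤ q.2 then q else (q.2 + 1, q.1 - 1))
    · intro q hq
      obtain ⟨hqT, hq1, hq2⟩ := hT3mem q hq
      have hm := hTmem _ hqT
      simp only [hU, Finset.mem_coe, Finset.mem_filter, Finset.mem_product, Finset.mem_Icc]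
      by_cases hud : q.1 ≤ q.2
      · rw [if_pos hud]
        exact ⟨⟨⟨by omega, by omega⟩, by omega, by omega⟩, hud⟩
      · rw [if_neg hud]
        have hd := hT3down q hq (by omega)
        refine ⟨⟨⟨by simp only; omega, by simp only; omega⟩, by simp only; omega,
          by simp only; omega⟩, by simp only; omega⟩
    · intro q hq q' hq' hh
      replace hq := Finset.mem_coe.mp hq
      replace hq' := Finset.mem_coe.mp hq'
      simp only at hh
      by_cases hud : q.1 ≤ q.2 <;> by_cases hud' : q'.1 ≤ q'.2
      · rwa [if_pos hud, if_pos hud'] at hh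
      · rw [if_pos hud, if_neg hud'] at hh
        exfalso
        obtain ⟨hqT, hq1, hq2⟩ := hT3mem q hq
        obtain ⟨hqT', hq1', hq2'⟩ := hT3mem q' hq'
        have hd' := hT3down q' hq' (by omega)
        have hadj := hTadj _ hqT _ hqT'
        have hh1 : q.1 = q'.2 + 1 := by
          have := congrArg Prod.fst hh; simpa using this
        have hh2 : q.2 = q'.1 - 1 := by
          have := congrArg Prod.snd hh; simpa using this
        exact hadj ⟨Or.inr ⟨by omega, by omega⟩, Or.inr ⟨by omega, by omega⟩⟩
      · rw [if_neg hud, if_pos hud'] at hh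
        exfalso
        obtain ⟨hqT, hq1, hq2⟩ := hT3mem q hq
        obtain ⟨hqT', hq1', hq2'⟩ := hT3mem q' hq'
        have hd := hT3down q hq (by omega)
        have hadj := hTadj _ hqT' _ hqT
        have hh1 : q'.1 = q.2 + 1 := by
          have := congrArg Prod.fst hh; simpa using this.symm
        have hh2 : q'.2 = q.1 - 1 := by
          have := congrArg Prod.snd hh; simpa using this.symm
        exact hadj ⟨Or.inr ⟨by omega, by omega⟩, Or.inr ⟨by omega, by omega⟩⟩
      · rw [if_neg hud, if_neg hud'] at hh
        obtain ⟨hqT, hq1, hq2⟩ := hT3mem q hq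
        obtain ⟨hqT', hq1', hq2'⟩ := hT3mem q' hq'
        have hh1 : q.2 + 1 = q'.2 + 1 := by
          have := congrArg Prod.fst hh; simpa using this
        have hh2 : q.1 - 1 = q'.1 - 1 := by
          have := congrArg Prod.snd hh; simpa using this
        exact Prod.ext (by omega) (by omega)
  have hUcard : U.card ≤ k * (k + 1) / 2 := by
    have h1 : U.card ≤ ((Finset.Icc 2 (k+1)).sym2).card := by
      refine Finset.card_le_card_of_injOn (s := U) (t := (Finset.Icc 2 (k+1)).sym2) (fun q : ℕ × ℕ => Sym2.mk q.1 q.2) ?_ ?_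
      · intro q hq
        replace hq := Finset.mem_coe.mp hq
        simp only [hU, Finset.mem_filter, Finset.mem_product, Finset.mem_Icc] at hq
        obtain ⟨a, b⟩ := q
        simp only [Finset.mem_coe]
        rw [Finset.mk_mem_sym2_iff]
        simp only [Finset.mem_Icc]
        exact ⟨⟨hq.1.1.1, hq.1.1.2⟩, hq.1.2.1, hq.1.2.2⟩
      · intro q hq q' hq' hh
        replace hq := Finset.mem_coe.mp hq
        replace hq' := Finset.mem_coe.mp hq'
        simp only [hU, Finset.mem_filter] at hq hq'
        simp only at hh
        obtain ⟨a, b⟩ := q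
        obtain ⟨a', b'⟩ := q'
        dsimp only at hh
        rw [Sym2.eq_iff] at hh
        have hab : a ≤ b := by simpa using hq.2
        have hab' : a' ≤ b' := by simpa using hq'.2
        rcases hh with ⟨rfl, rfl⟩ | ⟨h3, h4⟩
        · rfl
        · subst h3; subst h4
          have hab2 : a = b := le_antisymm hab hab'
          rw [hab2]
    have h2 : ((Finset.Icc 2 (k+1)).sym2).card = k * (k + 1) / 2 := by
      rw [Finset.card_sym2, Nat.card_Icc]
      have hh : k + 1 + 1 - 2 = k := rfl
      rw [hh, Nat.choose_two_right]
      have h3 : k + 1 - 1 = k := rfl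
      rw [h3, Nat.mul_comm]
    exact h1.trans (le_of_eq h2)
  -- arithmetic and assembly
  have harith : (k+1)*(k+2)/2 + 2 = k*(k+1)/2 + (k+3) := by
    have h : (k+1)*(k+2) = k*(k+1) + (k+1)*2 := by ring
    rw [h, Nat.add_mul_div_right _ _ (by norm_num : 0 < 2)]
    omega
  rw [hcard, harith]
  omega

end CrownPaper
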